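/- Let X be a T0 space. Every closed well-filtered determined subset of X is irreducible; that is, if A is a nonempty closed set such that for every continuous map f from X to a well-filtered T0 space Y there is a (unique) y ∈ Y with closure(f(A)) = closure({y}), then A is an irreducible closed set. -/

import Mathlib

open Set

universe u

variable {α : Type u}

/-- The specialization order used in the paper: `x ≤ y` iff `x ∈ closure {y}`. -/
def specLE [TopologicalSpace α] (x y : α) : Prop := x ∈ closure ({y} : Set α)

/-- `↑x = {y | x ≤ y}` in the specialization order. -/
def upOf [TopologicalSpace α] (x : α) : Set α := {y | specLE x y}

/-- `↑F = {y | ∃ a ∈ F, a ≤ y}` in the specialization order. -/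
def upSetOf [TopologicalSpace α] (F : Set α) : Set α := {y | ∃ a ∈ F, specLE a y}

/-- `↓B = {x | ∃ b ∈ B, x ≤ b}` in the specialization order. -/
def downOf [TopologicalSpace α] (B : Set α) : Set α := {x | ∃ b ∈ B, specLE x b}

/-- A set directed with respect to the specialization order: nonempty, and any two
elements have an upper bound in it. -/
def SDirected [TopologicalSpace α] (D : Set α) : Prop :=
  D.Nonempty ∧ ∀ a ∈ D, ∀ b ∈ D, ∃ c ∈ D, specLE a c ∧ specLE b c

/-- `s` is a supremum (least upper bound) of `D` in the specialization order. -/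
def SIsSup [TopologicalSpace α] (D : Set α) (s : α) : Prop :=
  (∀ d ∈ D, specLE d s) ∧ ∀ t : α, (∀ d ∈ D, specLE d t) → specLE s t

/-- Upper set (= saturated set) in the specialization order. -/
def SUpper [TopologicalSpace α] (A : Set α) : Prop :=
  ∀ ⦃x y : α⦄, x ∈ A → specLE x y → y ∈ A

/-- Scott open set with respect to the specialization order. -/
def SScottOpen [TopologicalSpace α] (U : Set α) : Prop :=
  SUpper U ∧ ∀ D : Set α, SDirected D → ∀ s : α, SIsSup D s → s ∈ U → (D ∩ U).Nonempty

/-- A d-space: a dcpo under the specialization order, all open sets Scott open. -/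
def IsDSpace (α : Type u) [TopologicalSpace α] : Prop :=
  (∀ D : Set α, SDirected D → ∃ s : α, SIsSup D s) ∧
    ∀ U : Set α, IsOpen U → SScottOpen U

/-- Member of `K(X)`: nonempty, compact and saturated. -/
def IsKSet [TopologicalSpace α] (K : Set α) : Prop :=
  K.Nonempty ∧ IsCompact K ∧ SUpper K

/-- A filtered family of sets: nonempty, and any two members contain a common member. -/
def FilteredFam (𝒦 : Set (Set α)) : Prop :=
  𝒦.Nonempty ∧ ∀ K1 ∈ 𝒦, ∀ K2 ∈ 𝒦, ∃ K3 ∈ 𝒦, K3 ⊆ K1 ∩ K2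

/-- Well-filtered space: for every filtered family of nonempty compact saturated sets whose
intersection is contained in an open `U`, some member is contained in `U`. -/
def IsWellFiltered (α : Type u) [TopologicalSpace α] : Prop :=
  ∀ 𝒦 : Set (Set α), (∀ K ∈ 𝒦, IsKSet K) → FilteredFam 𝒦 →
    ∀ U : Set α, IsOpen U → ⋂₀ 𝒦 ⊆ U → ∃ K ∈ 𝒦, K ⊆ U

/-- Rudin set: a nonempty set `A` such that for some filtered family `𝒦 ⊆ K(X)`,
`closure A` is a minimal closed set meeting every member of `𝒦`. -/
def IsRudin [TopologicalSpace α] (A : Set α) : Prop :=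
  A.Nonempty ∧ ∃ 𝒦 : Set (Set α), (∀ K ∈ 𝒦, IsKSet K) ∧ FilteredFam 𝒦 ∧
    (∀ K ∈ 𝒦, (closure A ∩ K).Nonempty) ∧
    ∀ B : Set α, IsClosed B → B ⊆ closure A → (∀ K ∈ 𝒦, (B ∩ K).Nonempty) → B = closure A

/-- Well-filtered determined set: every continuous map into a well-filtered T0 space sends it
to a set whose closure is the closure of a unique point. -/
def IsWFD [TopologicalSpace α] (A : Set α) : Prop :=
  ∀ (Y : Type u) [TopologicalSpace Y] [T0Space Y], IsWellFiltered Y →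
    ∀ f : α → Y, Continuous f → ∃! y : Y, closure (f '' A) = closure ({y} : Set Y)

/-- Irreducible set. -/
def IsIrred [TopologicalSpace α] (A : Set α) : Prop :=
  A.Nonempty ∧ ∀ F1 F2 : Set α, IsClosed F1 → IsClosed F2 → A ⊆ F1 ∪ F2 → A ⊆ F1 ∨ A ⊆ F2

/-- Sober space: every irreducible closed set is the closure of a unique point. -/
def IsSober (α : Type u) [TopologicalSpace α] : Prop :=
  ∀ A : Set α, IsClosed A → IsIrred A → ∃! x : α, A = closure ({x} : Set α)

/-- `A` has a maximal element with respect to the specialization order. -/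
def HasMaxElem [TopologicalSpace α] (A : Set α) : Prop :=
  ∃ m ∈ A, ∀ a ∈ A, specLE m a → a = m

/-- Strong d-space. -/
def IsStrongDSpace (α : Type u) [TopologicalSpace α] : Prop :=
  ∀ D : Set α, SDirected D → ∀ x : α, ∀ U : Set α, IsOpen U →
    (⋂ d ∈ D, upOf d) ∩ upOf x ⊆ U → ∃ d ∈ D, upOf d ∩ upOf x ⊆ U

/-! ### Auxiliary: the four-point "double Sierpiński" space -/

/-- A universe-`u` copy of `Bool × Bool`. -/
def WFTop : Type u := ULift.{u} (Bool × Bool)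

/-- Componentwise order on `WFTop` (with `false < true`). -/
def wfle (x y : WFTop.{u}) : Prop := x.down.1 ≤ y.down.1 ∧ x.down.2 ≤ y.down.2

lemma wfle_refl (x : WFTop.{u}) : wfle x x := ⟨le_refl _, le_refl _⟩

lemma wfle_trans {x y z : WFTop.{u}} (h1 : wfle x y) (h2 : wfle y z) : wfle x z :=
  ⟨le_trans h1.1 h2.1, le_trans h1.2 h2.2⟩

lemma wfle_antisymm {x y : WFTop.{u}} (h1 : wfle x y) (h2 : wfle y x) : x = y := by
  cases x; cases y
  simp only [wfle] at h1 h2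
  congr 1
  exact Prod.ext (le_antisymm h1.1 h2.1) (le_antisymm h1.2 h2.2)

/-- Alexandrov (upper-set) topology on `WFTop`. -/
instance : TopologicalSpace (WFTop.{u}) where
  IsOpen U := ∀ ⦃x y : WFTop.{u}⦄, x ∈ U → wfle x y → y ∈ U
  isOpen_univ := fun _ _ _ _ => trivial
  isOpen_inter := fun _ _ hU hV _ _ hx h => ⟨hU hx.1 h, hV hx.2 h⟩
  isOpen_sUnion := fun _ hS _ _ hx h => by
    obtain ⟨t, ht, hxt⟩ := hx; exact ⟨t, ht, hS t ht hxt h⟩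

lemma wf_isOpen_iff {U : Set (WFTop.{u})} :
    IsOpen U ↔ ∀ ⦃x y : WFTop.{u}⦄, x ∈ U → wfle x y → y ∈ U := Iff.rfl

lemma wf_up_open (z : WFTop.{u}) : IsOpen {w : WFTop.{u} | wfle z w} :=
  fun _ _ ha hab => wfle_trans ha hab

instance : T0Space (WFTop.{u}) := by
  refine (t0Space_iff_inseparable _).mpr ?_
  intro x y h
  have h1 : y ∈ {w : WFTop.{u} | wfle x w} :=
    (h.mem_open_iff (wf_up_open x)).mp (wfle_refl x)
  have h2 : x ∈ {w : WFTop.{u} | wfle y w} :=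
    (h.mem_open_iff (wf_up_open y)).mpr (wfle_refl y)
  exact wfle_antisymm h1 h2

instance : Finite (WFTop.{u}) := by
  unfold WFTop; infer_instance

lemma wf_wellFiltered : IsWellFiltered (WFTop.{u}) := by
  intro 𝒦 _ hfil U _ hsub
  have hfin : 𝒦.Finite := Set.toFinite 𝒦
  obtain ⟨K0, hK0, hmin0⟩ := Set.Finite.exists_minimalFor id 𝒦 hfin hfil.1
  have hmin : ∀ K3 ∈ 𝒦, K3 ⊆ K0 → K0 = K3 := fun K3 hK3 h => subset_antisymm (hmin0 hK3 h) h
  have hK0le : ∀ K ∈ 𝒦, K0 ⊆ K := by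
    intro K hK
    obtain ⟨K3, hK3, hsub3⟩ := hfil.2 K0 hK0 K hK
    have he : K0 = K3 := hmin K3 hK3 ((Set.subset_inter_iff.mp hsub3).1)
    intro x hx
    exact (Set.subset_inter_iff.mp hsub3).2 (he ▸ hx)
  exact ⟨K0, hK0, fun x hx => hsub (fun K hK => hK0le K hK hx)⟩

/-- In `WFTop`, the closure of a point is its down set. -/
lemma wf_closure_singleton (z : WFTop.{u}) :
    closure ({z} : Set (WFTop.{u})) = {w : WFTop.{u} | wfle w z} := by
  apply subset_antisymm
  · apply closure_minimal
    · exact Set.singleton_subset_iff.mpr (wfle_refl z)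
    · rw [← isOpen_compl_iff]
      intro a b ha hab hb
      exact ha (wfle_trans hab hb)
  · intro w hw
    rw [mem_closure_iff]
    intro U hU hwU
    exact ⟨z, hU hwU hw, rfl⟩

/-- The closure of any set in `WFTop` is contained in its down set. -/
lemma wf_closure_subset_down (S : Set (WFTop.{u})) :
    closure S ⊆ {w : WFTop.{u} | ∃ s ∈ S, wfle w s} := by
  apply closure_minimal
  · exact fun s hs => ⟨s, hs, wfle_refl s⟩
  · rw [← isOpen_compl_iff]
    intro a b ha hab hb
    obtain ⟨s, hs, hbs⟩ := hb
    exact ha ⟨s, hs, wfle_trans hab hbs⟩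

/-- every closed well-filtered determined set is irreducible. -/
theorem stmt_4 {α : Type u} [TopologicalSpace α] [T0Space α]
    (A : Set α) (hA : IsClosed A) (hne : A.Nonempty) (hwd : IsWFD A) :
    IsIrred A := by
  classical
  refine ⟨hne, ?_⟩
  intro F1 F2 hF1 hF2 hsub
  by_contra hcon
  push_neg at hcon
  obtain ⟨h1, h2⟩ := hcon
  obtain ⟨a1, ha1A, ha1⟩ := Set.not_subset.mp h1
  obtain ⟨a2, ha2A, ha2⟩ := Set.not_subset.mp h2
  set f : α → WFTop.{u} :=
    fun a => ⟨(if a ∈ F1 then false else true, if a ∈ F2 then false else true)⟩ with hf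
  -- continuity of f
  have hcont : Continuous f := by
    rw [continuous_def]
    intro U hU
    have heq : f ⁻¹' U =
        (⋃ _ : (⟨(false, false)⟩ : WFTop.{u}) ∈ U, (Set.univ : Set α)) ∪
        (⋃ _ : (⟨(true, false)⟩ : WFTop.{u}) ∈ U, F1ᶜ) ∪
        (⋃ _ : (⟨(false, true)⟩ : WFTop.{u}) ∈ U, F2ᶜ) ∪
        (⋃ _ : (⟨(true, true)⟩ : WFTop.{u}) ∈ U, F1ᶜ ∩ F2ᶜ) := by
      ext a
      constructor
      · intro haU
        by_cases hA1 : a ∈ F1 <;> by_cases hA2 : a ∈ F2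
        · refine Or.inl (Or.inl (Or.inl ?_))
          refine Set.mem_iUnion.mpr ⟨?_, trivial⟩
          have h' := Set.mem_preimage.mp haU; simp [hf, hA1, hA2] at h'; exact h'
        · refine Or.inl (Or.inr ?_)
          refine Set.mem_iUnion.mpr ⟨?_, hA2⟩
          have h' := Set.mem_preimage.mp haU; simp [hf, hA1, hA2] at h'; exact h'
        · refine Or.inl (Or.inl (Or.inr ?_))
          refine Set.mem_iUnion.mpr ⟨?_, hA1⟩
          have h' := Set.mem_preimage.mp haU; simp [hf, hA1, hA2] at h'; exact h'
        · refine Or.inr ?_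
          refine Set.mem_iUnion.mpr ⟨?_, hA1, hA2⟩
          have h' := Set.mem_preimage.mp haU; simp [hf, hA1, hA2] at h'; exact h'
      · intro haV
        rcases haV with ((h | h) | h) | h
        · obtain ⟨hm, -⟩ := Set.mem_iUnion.mp h
          refine hU hm ?_
          exact ⟨Bool.false_le _, Bool.false_le _⟩
        · obtain ⟨hm, hac⟩ := Set.mem_iUnion.mp h
          refine hU hm ?_
          rw [Set.mem_compl_iff] at hac
          constructor
          · simp [hf, hac]
          · exact Bool.false_le _
        · obtain ⟨hm, hac⟩ := Set.mem_iUnion.mp h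
          refine hU hm ?_
          rw [Set.mem_compl_iff] at hac
          constructor
          · exact Bool.false_le _
          · simp [hf, hac]
        · obtain ⟨hm, hac1, hac2⟩ := Set.mem_iUnion.mp h
          refine hU hm ?_
          rw [Set.mem_compl_iff] at hac1
          rw [Set.mem_compl_iff] at hac2
          constructor
          · simp [hf, hac1]
          · simp [hf, hac2]
    rw [heq]
    refine (((isOpen_iUnion fun _ => isOpen_univ).union
      (isOpen_iUnion fun _ => hF1.isOpen_compl)).union
      (isOpen_iUnion fun _ => hF2.isOpen_compl)).union
      (isOpen_iUnion fun _ => (hF1.isOpen_compl).inter hF2.isOpen_compl)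
  obtain ⟨y, hy, -⟩ := hwd (WFTop.{u}) wf_wellFiltered f hcont
  -- f a1 and f a2 are in closure (f '' A) = closure {y} = ↓y
  have hd1 : wfle (f a1) y := by
    have : f a1 ∈ closure ({y} : Set (WFTop.{u})) :=
      hy ▸ subset_closure ⟨a1, ha1A, rfl⟩
    rwa [wf_closure_singleton] at this
  have hd2 : wfle (f a2) y := by
    have : f a2 ∈ closure ({y} : Set (WFTop.{u})) :=
      hy ▸ subset_closure ⟨a2, ha2A, rfl⟩
    rwa [wf_closure_singleton] at this
  have hy1 : y.down.1 = true := by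
    have : (f a1).down.1 ≤ y.down.1 := hd1.1
    simp only [hf, if_neg ha1] at this
    exact le_antisymm (Bool.le_true _) this
  have hy2 : y.down.2 = true := by
    have : (f a2).down.2 ≤ y.down.2 := hd2.2
    simp only [hf, if_neg ha2] at this
    exact le_antisymm (Bool.le_true _) this
  -- y is in closure (f '' A) ⊆ ↓(f '' A), so some a ∈ A has y ≤ f a
  have hyc : y ∈ closure (f '' A) := by
    rw [hy]; exact subset_closure rfl
  obtain ⟨w, ⟨a, haA, rfl⟩, hyw⟩ := wf_closure_subset_down (f '' A) hyc
  -- then f a = (true, true), so a ∉ F1 and a ∉ F2, contradicting A ⊆ F1 ∪ F2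
  have hfa1 : (f a).down.1 = true :=
    le_antisymm (Bool.le_true _) (hy1 ▸ hyw.1)
  have hfa2 : (f a).down.2 = true :=
    le_antisymm (Bool.le_true _) (hy2 ▸ hyw.2)
  have haF1 : a ∉ F1 := by
    intro h; simp [hf, h] at hfa1
  have haF2 : a ∉ F2 := by
    intro h; simp [hf, h] at hfa2
  rcases hsub haA with h | h
  · exact haF1 h
  · exact haF2 h
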